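/- Let p ∈ (2,∞), let JT_p be the James tree space built on ℓ_p, and let B be the closed linear span in (JT_p)* of the biorthogonal functionals {e_v*} of the unit vector basis {e_v} of JT_p. Then JT_p is isomorphic (linearly homeomorphic) to the dual space B*, via the natural evaluation map. -/

import Mathlib

/-- A finite set of vertices of the infinite binary tree (vertices = finite 0-1 sequences,
ordered by extension) is a *descending path* if it consists of the initial segments
`v ++ w.take k`, `0 ≤ k ≤ w.length`, for some vertices `v, w`; i.e. it is totally ordered
by extension and each vertex other than the last is the immediate predecessor of the next. -/
def IsDescendingPath (J : Finset (List Bool)) : Prop :=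
  ∃ v w : List Bool, (J : Set (List Bool)) = {u | ∃ k ≤ w.length, u = v ++ List.take k w}

/-- The set of numbers `(Σ_{j=1}^k |Σ_{v ∈ J_j} f v|^p)^{1/p}` over all finite families
`J_1, …, J_k` of pairwise disjoint descending paths in the binary tree. -/
def jtPathSums (p : ℝ) (f : List Bool → ℝ) : Set ℝ :=
  { s | ∃ (k : ℕ) (J : Fin k → Finset (List Bool)),
      (∀ j, IsDescendingPath (J j)) ∧
      (∀ i j, i ≠ j → Disjoint (J i) (J j)) ∧
      s = (∑ j, |∑ v ∈ J j, f v| ^ p) ^ (1 / p) }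

/-- The Banach space `E` is (a realization of) the James tree space `JT_p` via the
coordinate map `coord`: `coord` identifies `E`, as a vector space, with the space of
functions `f` on the binary tree for which the quantities in `jtPathSums p f` are bounded,
and the norm of `x ∈ E` is the supremum of `jtPathSums p (coord x)`. -/
def IsJamesTreeSpace (p : ℝ) {E : Type*} [NormedAddCommGroup E] [NormedSpace ℝ E]
    [CompleteSpace E] (coord : E →ₗ[ℝ] (List Bool → ℝ)) : Prop :=
  Function.Injective coord ∧
  (∀ f : List Bool → ℝ, f ∈ Set.range coord ↔ BddAbove (jtPathSums p f)) ∧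
  (∀ x : E, ‖x‖ = sSup (jtPathSums p (coord x)))

/-- The closed linear span, in the dual of (a realization of) `JT_p`, of the biorthogonal
functionals `e_v* : x ↦ (coord x) v` of the unit vector basis. -/
noncomputable def jtBiorthSpan {E : Type*} [NormedAddCommGroup E] [NormedSpace ℝ E]
    [CompleteSpace E] (coord : E →ₗ[ℝ] (List Bool → ℝ)) :
    Submodule ℝ (StrongDual ℝ E) :=
  (Submodule.span ℝ
    {φ : StrongDual ℝ E | ∃ v : List Bool, ∀ x : E, φ x = coord x v}).topologicalClosure

noncomputable instance jtBiorthSpan.instAddCommGroup {E : Type*} [NormedAddCommGroup E]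
    [NormedSpace ℝ E] [CompleteSpace E] (coord : E →ₗ[ℝ] (List Bool → ℝ)) :
    AddCommGroup (jtBiorthSpan coord) :=
  Submodule.addCommGroup _

namespace JTAux

open Finset

variable {p : ℝ}

lemma isDescendingPath_singleton (v : List Bool) : IsDescendingPath {v} := by
  refine ⟨v, [], ?_⟩
  ext u
  constructor
  · intro hu
    simp only [Finset.coe_singleton, Set.mem_singleton_iff] at hu
    exact ⟨0, Nat.le_refl _, by simp [hu]⟩
  · rintro ⟨k, hk, rfl⟩
    simp

lemma zero_mem_jtPathSums (hp : 0 < p) (f : List Bool → ℝ) : (0:ℝ) ∈ jtPathSums p f := by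
  refine ⟨0, fun j => ∅, fun j => j.elim0, fun i j _ => i.elim0, ?_⟩
  rw [Finset.univ_eq_empty, Finset.sum_empty, Real.zero_rpow (by positivity)]

lemma abs_mem_jtPathSums (hp : 0 < p) (f : List Bool → ℝ) (v : List Bool) :
    |f v| ∈ jtPathSums p f := by
  refine ⟨1, fun _ => {v}, fun _ => isDescendingPath_singleton v,
    fun i j hij => absurd (Subsingleton.elim i j) hij, ?_⟩
  rw [Fin.sum_univ_one, Finset.sum_singleton, ← Real.rpow_mul (abs_nonneg _),
    mul_one_div_cancel hp.ne', Real.rpow_one]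

section JT

variable {E : Type*} [NormedAddCommGroup E] [NormedSpace ℝ E] [CompleteSpace E]
variable (coord : E →ₗ[ℝ] (List Bool → ℝ))

lemma pathSum_le_norm (hJT : IsJamesTreeSpace p coord) (x : E) {k : ℕ}
    (J : Fin k → Finset (List Bool)) (hd : ∀ j, IsDescendingPath (J j))
    (hdis : ∀ i j, i ≠ j → Disjoint (J i) (J j)) :
    (∑ j, |∑ v ∈ J j, coord x v| ^ p) ^ (1 / p) ≤ ‖x‖ := by
  rw [hJT.2.2 x]
  exact le_csSup ((hJT.2.1 _).1 ⟨x, rfl⟩) ⟨k, J, hd, hdis, rfl⟩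

lemma abs_coord_le (hp : 0 < p) (hJT : IsJamesTreeSpace p coord) (x : E) (v : List Bool) :
    |coord x v| ≤ ‖x‖ := by
  rw [hJT.2.2 x]
  exact le_csSup ((hJT.2.1 _).1 ⟨x, rfl⟩) (abs_mem_jtPathSums hp _ v)

/-- The coordinate functional `e_v*`. -/
noncomputable def coordCLM (hp : 0 < p) (hJT : IsJamesTreeSpace p coord) (v : List Bool) :
    E →L[ℝ] ℝ :=
  LinearMap.mkContinuous ((LinearMap.proj v).comp coord) 1 fun x => by
    simpa using abs_coord_le coord hp hJT x v

@[simp] lemma coordCLM_apply (hp : 0 < p) (hJT : IsJamesTreeSpace p coord) (v : List Bool)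
    (x : E) : coordCLM coord hp hJT v x = coord x v := rfl


lemma norm_comb_le {q : ℝ} (hpq : Real.HolderConjugate p q) (hJT : IsJamesTreeSpace p coord)
    {k : ℕ} (J : Fin k → Finset (List Bool)) (hd : ∀ j, IsDescendingPath (J j))
    (hdis : ∀ i j, i ≠ j → Disjoint (J i) (J j)) (a : Fin k → ℝ) :
    ‖∑ j, a j • ∑ v ∈ J j, coordCLM coord hpq.pos hJT v‖ ≤ (∑ j, |a j| ^ q) ^ (1 / q) := by
  have hRHS : 0 ≤ (∑ j, |a j| ^ q) ^ (1 / q) :=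
    Real.rpow_nonneg (Finset.sum_nonneg fun j _ => Real.rpow_nonneg (abs_nonneg _) _) _
  refine ContinuousLinearMap.opNorm_le_bound _ hRHS fun x => ?_
  have happ : (∑ j, a j • ∑ v ∈ J j, coordCLM coord hpq.pos hJT v) x
      = ∑ j, a j * ∑ v ∈ J j, coord x v := by
    simp [ContinuousLinearMap.sum_apply]
  rw [Real.norm_eq_abs, happ]
  calc |∑ j, a j * ∑ v ∈ J j, coord x v|
      ≤ ∑ j, |a j * ∑ v ∈ J j, coord x v| := Finset.abs_sum_le_sum_abs _ _
    _ = ∑ j, |∑ v ∈ J j, coord x v| * |a j| := by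
        simp_rw [abs_mul, mul_comm]
    _ ≤ (∑ j, |∑ v ∈ J j, coord x v| ^ p) ^ (1/p) * (∑ j, |a j| ^ q) ^ (1/q) :=
        Real.inner_le_Lp_mul_Lq_of_nonneg _ hpq (fun _ _ => abs_nonneg _)
          (fun _ _ => abs_nonneg _)
    _ ≤ ‖x‖ * (∑ j, |a j| ^ q) ^ (1/q) :=
        mul_le_mul_of_nonneg_right (pathSum_le_norm coord hJT x J hd hdis) hRHS
    _ = (∑ j, |a j| ^ q) ^ (1/q) * ‖x‖ := mul_comm _ _

lemma comb_mem_span (hp : 0 < p) (hJT : IsJamesTreeSpace p coord) {k : ℕ}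
    (J : Fin k → Finset (List Bool)) (a : Fin k → ℝ) :
    (∑ j, a j • ∑ v ∈ J j, coordCLM coord hp hJT v) ∈ jtBiorthSpan coord :=
  Submodule.le_topologicalClosure _ <|
    Submodule.sum_mem _ fun j _ => Submodule.smul_mem _ _ <|
      Submodule.sum_mem _ fun v _ => Submodule.subset_span ⟨v, fun x => rfl⟩

end JT

lemma exists_dual_coeffs {q : ℝ} (hpq : Real.HolderConjugate p q) {k : ℕ} (t : Fin k → ℝ) :
    ∃ a : Fin k → ℝ, (∑ j, |a j| ^ q) ^ (1 / q) ≤ 1 ∧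
      ∑ j, a j * t j = (∑ j, |t j| ^ p) ^ (1 / p) := by
  have hq0 : q ≠ 0 := hpq.symm.ne_zero
  set D := ∑ j, |t j| ^ p with hDdef
  have hD0 : 0 ≤ D := Finset.sum_nonneg fun j _ => Real.rpow_nonneg (abs_nonneg _) _
  rcases eq_or_lt_of_le hD0 with hD | hD
  · have ht : ∀ j, t j = 0 := by
      intro j
      have h1 := (Finset.sum_eq_zero_iff_of_nonneg
        (fun j _ => Real.rpow_nonneg (abs_nonneg (t j)) p)).1 hD.symm j (Finset.mem_univ j)
      have h2 := (Real.rpow_eq_zero (abs_nonneg _) hpq.ne_zero).1 h1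
      simpa [abs_eq_zero] using h2
    refine ⟨0, ?_, ?_⟩
    · simp only [Pi.zero_apply, abs_zero, Real.zero_rpow hq0, Finset.sum_const_zero]
      rw [Real.zero_rpow (one_div_ne_zero hq0)]
      norm_num
    · simp only [Pi.zero_apply, zero_mul, Finset.sum_const_zero]
      rw [← hD, Real.zero_rpow (one_div_ne_zero hpq.ne_zero)]
  · set s := D ^ (1/p) with hsdef
    have hs : 0 < s := Real.rpow_pos_of_pos hD _
    have hsp : 0 < s ^ (p - 1) := Real.rpow_pos_of_pos hs _
    set a : Fin k → ℝ := fun j => |t j| ^ (p - 2) * t j / s ^ (p - 1) with hadef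
    have habs : ∀ j, |a j| = (|t j| / s) ^ (p - 1) := by
      intro j
      rcases eq_or_ne (t j) 0 with h | h
      · simp [hadef, h, Real.zero_rpow hpq.sub_one_ne_zero, zero_div]
      · have ht0 : 0 < |t j| := abs_pos.2 h
        have hmul : |t j| ^ (p - 2) * |t j| = |t j| ^ (p - 1) := by
          nth_rewrite 2 [← Real.rpow_one |t j|]
          rw [← Real.rpow_add ht0]
          ring_nf
        rw [hadef]
        simp only [abs_div, abs_mul, abs_of_nonneg (Real.rpow_nonneg (abs_nonneg (t j)) (p-2)),
          abs_of_pos hsp, abs_abs]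
        rw [hmul, Real.div_rpow (abs_nonneg _) hs.le]
    have hspD : s ^ p = D := by
      rw [hsdef, ← Real.rpow_mul hD0, one_div_mul_cancel hpq.ne_zero, Real.rpow_one]
    have hsum_aq : ∑ j, |a j| ^ q = 1 := by
      calc ∑ j, |a j| ^ q = ∑ j, (|t j| / s) ^ ((p-1) * q) := by
            refine Finset.sum_congr rfl fun j _ => ?_
            rw [habs j, ← Real.rpow_mul (div_nonneg (abs_nonneg _) hs.le)]
        _ = ∑ j, |t j| ^ p / s ^ p := by
            rw [hpq.sub_one_mul_conj]
            exact Finset.sum_congr rfl fun j _ => Real.div_rpow (abs_nonneg _) hs.le _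
        _ = 1 := by rw [← Finset.sum_div, hspD, div_self hD.ne']
    have hat : ∀ j, a j * t j = |t j| ^ p / s ^ (p - 1) := by
      intro j
      rcases eq_or_ne (t j) 0 with h | h
      · simp [hadef, h, Real.zero_rpow hpq.ne_zero]
      · have ht0 : 0 < |t j| := abs_pos.2 h
        have h2 : t j * t j = |t j| ^ (2:ℝ) := by
          rw [show (2:ℝ) = ((2:ℕ):ℝ) by norm_num, Real.rpow_natCast, pow_two,
            abs_mul_abs_self]
        have key : |t j| ^ (p - 2) * (t j * t j) = |t j| ^ p := by
          rw [h2, ← Real.rpow_add ht0]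
          ring_nf
        rw [hadef, div_mul_eq_mul_div, mul_assoc, key]
    have hfinal : ∑ j, a j * t j = s := by
      simp_rw [hat]
      rw [← Finset.sum_div]
      rw [show (∑ j, |t j| ^ p) = D from rfl]
      have hstep : s ^ (p - 1) = D ^ ((1/p) * (p - 1)) := by
        rw [hsdef, ← Real.rpow_mul hD0]
      rw [hstep]
      have hDiv : D / D ^ ((1/p) * (p - 1)) = D ^ (1 - (1/p) * (p - 1)) := by
        rw [Real.rpow_sub hD, Real.rpow_one]
      rw [hDiv, hsdef]
      congr 1
      have hpne : p ≠ 0 := hpq.ne_zero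
      field_simp
      ring
    exact ⟨a, by rw [hsum_aq, Real.one_rpow], hfinal⟩


end JTAux

/-- For `p ∈ (2,∞)`, the James tree space `JT_p` is isomorphic to the dual `B*` of the
closed linear span `B ⊆ (JT_p)*` of the biorthogonal functionals, via the natural
evaluation map `x ↦ (b ↦ b x)`. -/
theorem statement10 {p : ℝ} (hp : 2 < p)
    {E : Type*} [NormedAddCommGroup E] [NormedSpace ℝ E] [CompleteSpace E]
    (coord : E →ₗ[ℝ] (List Bool → ℝ)) (hJT : IsJamesTreeSpace p coord) :
    ∃ T : E ≃L[ℝ] StrongDual ℝ (jtBiorthSpan coord),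
      ∀ (x : E) (b : jtBiorthSpan coord), T x b = (b : StrongDual ℝ E) x := by
  have hp1 : 1 < p := by linarith
  have hp0 : 0 < p := by linarith
  have hpq : Real.HolderConjugate p (Real.conjExponent p) :=
    Real.HolderConjugate.conjExponent hp1
  let B := jtBiorthSpan coord
  letI : SeminormedAddCommGroup B := Submodule.seminormedAddCommGroup B
  letI : NormedSpace ℝ B := Submodule.normedSpace B
  let ev : E →L[ℝ] StrongDual ℝ B :=
    ContinuousLinearMap.flip (𝕜 := ℝ) (𝕜₂ := ℝ) (𝕜₃ := ℝ) (E := B) (F := E) (G := ℝ) B.subtypeL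
  have hev : ∀ (x : E) (b : B), ev x b = (b : StrongDual ℝ E) x := fun x b => rfl
  have norm_le : ∀ x : E, ‖ev x‖ ≤ ‖x‖ := by
    intro x
    refine ContinuousLinearMap.opNorm_le_bound _ (norm_nonneg x) fun b => ?_
    rw [hev]
    calc ‖(b : StrongDual ℝ E) x‖ ≤ ‖(b : StrongDual ℝ E)‖ * ‖x‖ :=
          (b : StrongDual ℝ E).le_opNorm x
      _ = ‖x‖ * ‖b‖ := mul_comm _ _
  have norm_ge : ∀ x : E, ‖x‖ ≤ ‖ev x‖ := by
    intro x
    rw [hJT.2.2 x]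
    refine csSup_le ⟨0, JTAux.zero_mem_jtPathSums hp0 _⟩ ?_
    rintro s ⟨k, J, hd, hdis, rfl⟩
    obtain ⟨a, ha1, ha2⟩ := JTAux.exists_dual_coeffs hpq (fun j => ∑ v ∈ J j, coord x v)
    set φ : E →L[ℝ] ℝ := ∑ j, a j • ∑ v ∈ J j, JTAux.coordCLM coord hpq.pos hJT v with hφ
    have hφB : φ ∈ B := JTAux.comb_mem_span coord hpq.pos hJT J a
    have hφx : φ x = ∑ j, a j * ∑ v ∈ J j, coord x v := by
      simp [hφ, ContinuousLinearMap.sum_apply]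
    have hφn : ‖φ‖ ≤ 1 := le_trans (JTAux.norm_comb_le coord hpq hJT J hd hdis a) ha1
    calc (∑ j, |∑ v ∈ J j, coord x v| ^ p) ^ (1 / p) = φ x := by rw [hφx]; exact ha2.symm
      _ ≤ ‖ev x (⟨φ, hφB⟩ : B)‖ := le_abs_self _
      _ ≤ ‖ev x‖ * ‖(⟨φ, hφB⟩ : B)‖ := (ev x).le_opNorm _
      _ ≤ ‖ev x‖ * 1 := mul_le_mul_of_nonneg_left hφn (norm_nonneg _)
      _ = ‖ev x‖ := mul_one _
  have hsurj : Function.Surjective ev := by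
    intro ψ
    obtain ⟨Φ, hΦ, -⟩ := exists_extension_norm_eq B ψ
    set f : List Bool → ℝ := fun v => Φ (JTAux.coordCLM coord hpq.pos hJT v) with hf
    have hbdd : BddAbove (jtPathSums p f) := by
      refine ⟨‖Φ‖, ?_⟩
      rintro s ⟨k, J, hd, hdis, rfl⟩
      obtain ⟨a, ha1, ha2⟩ := JTAux.exists_dual_coeffs hpq (fun j => ∑ v ∈ J j, f v)
      rw [← ha2]
      have hrw : ∑ j, a j * ∑ v ∈ J j, f v
          = Φ (∑ j, a j • ∑ v ∈ J j, JTAux.coordCLM coord hpq.pos hJT v) := by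
        rw [map_sum]
        refine Finset.sum_congr rfl fun j _ => ?_
        rw [map_smul, map_sum]
        rfl
      rw [hrw]
      refine le_trans (le_abs_self _) ?_
      rw [← Real.norm_eq_abs]
      refine le_trans (Φ.le_opNorm _) ?_
      have hb := mul_le_mul_of_nonneg_left
        (le_trans (JTAux.norm_comb_le coord hpq hJT J hd hdis a) ha1) (norm_nonneg Φ)
      simpa using hb
    obtain ⟨x, hx⟩ := (hJT.2.1 f).2 hbdd
    refine ⟨x, ?_⟩
    have hker : B ≤ (Φ - NormedSpace.inclusionInDoubleDual ℝ E x).ker := by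
      refine Submodule.topologicalClosure_minimal _ (Submodule.span_le.2 ?_)
        (ContinuousLinearMap.isClosed_ker _)
      rintro φ0 ⟨v, hv⟩
      have hφ0 : φ0 = JTAux.coordCLM coord hpq.pos hJT v :=
        ContinuousLinearMap.ext fun y => hv y
      simp only [SetLike.mem_coe, LinearMap.mem_ker, ContinuousLinearMap.coe_coe, ContinuousLinearMap.sub_apply]
      rw [hφ0, NormedSpace.dual_def]
      have h1 : (JTAux.coordCLM coord hpq.pos hJT v) x = f v := by
        rw [JTAux.coordCLM_apply, hx]
      rw [h1]
      have h2 : Φ (JTAux.coordCLM coord hpq.pos hJT v) = f v := rfl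
      rw [h2, sub_self]
    refine ContinuousLinearMap.ext fun b => ?_
    have hb := hker b.2
    rw [LinearMap.mem_ker, ContinuousLinearMap.coe_coe, ContinuousLinearMap.sub_apply, sub_eq_zero,
      NormedSpace.dual_def] at hb
    rw [hev x b, ← hb]
    exact hΦ b
  let L : E →ₗᵢ[ℝ] StrongDual ℝ B :=
    ⟨ev.toLinearMap, fun x => le_antisymm (norm_le x) (norm_ge x)⟩
  have hsurj' : Function.Surjective L := hsurj
  let Teq := LinearIsometryEquiv.ofSurjective L hsurj'
  refine ⟨Teq.toContinuousLinearEquiv, fun x b => ?_⟩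
  rfl
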